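/- Let d ≥ 1, μ ∈ ℝ, f : ℝ^d → ℝ^d be C¹, I ⊂ ℝ open, and let u : I × ℝ → ℝ^d be C² and 1-periodic in its second variable, and ω : I → ℝ be C¹, such that for every (κ, ζ) ∈ I × ℝ: ω(κ) ∂_ζ u(κ, ζ) = μ[u(κ, ζ+κ) − 2u(κ, ζ) + u(κ, ζ−κ)] + f(u(κ, ζ)). Fix k̄ ∈ I, write ū = u(k̄, ·), and let ψ : ℝ → ℝ^d be C¹ and 1-periodic with ω(k̄) ψ' + μ[ψ(·+k̄) − 2ψ + ψ(·−k̄)] + Df(ū(·))ᵀ ψ = 0 and ∫₀¹ ψ · ∂_ζ ū = 1. Then the linear group velocity formula holds: ω'(k̄) = ∫₀¹ ψ(ζ) · μ[∂_ζ ū(ζ+k̄) − ∂_ζ ū(ζ−k̄)] dζ. -/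

import Mathlib

open intervalIntegral MeasureTheory Set Function

lemma shift_integral (g : ℝ → ℝ) (hg : Function.Periodic g 1) (a : ℝ) :
    ∫ ζ in (0:ℝ)..1, g (ζ + a) = ∫ ζ in (0:ℝ)..1, g ζ := by
  rw [intervalIntegral.integral_comp_add_right g a]
  have := hg.intervalIntegral_add_eq a 0
  simpa [zero_add, add_comm] using this

lemma integral_deriv_periodic (g g' : ℝ → ℝ) (hg : ∀ ζ, HasDerivAt g (g' ζ) ζ)
    (h' : Continuous g') (hper : g 1 = g 0) : ∫ ζ in (0:ℝ)..1, g' ζ = 0 := by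
  rw [intervalIntegral.integral_eq_sub_of_hasDerivAt (fun x _ => hg x)
    (h'.intervalIntegrable 0 1), hper, sub_self]

lemma ibp_periodic {d : ℕ} {p q p' q' : ℝ → Fin d → ℝ}
    (hp : ∀ ζ i, HasDerivAt (fun t => p t i) (p' ζ i) ζ)
    (hq : ∀ ζ i, HasDerivAt (fun t => q t i) (q' ζ i) ζ)
    (hc1 : Continuous fun ζ => ∑ i, p' ζ i * q ζ i)
    (hc2 : Continuous fun ζ => ∑ i, p ζ i * q' ζ i)
    (hper : ∀ i, p 1 i * q 1 i = p 0 i * q 0 i) :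
    ∫ ζ in (0:ℝ)..1, ∑ i, p' ζ i * q ζ i = - ∫ ζ in (0:ℝ)..1, ∑ i, p ζ i * q' ζ i := by
  have key : ∫ ζ in (0:ℝ)..1,
      ((∑ i, p' ζ i * q ζ i) + (∑ i, p ζ i * q' ζ i)) = 0 := by
    apply integral_deriv_periodic (fun ζ => ∑ i, p ζ i * q ζ i) _ ?_ (hc1.add hc2) ?_
    · intro ζ
      have : HasDerivAt (fun t => ∑ i, p t i * q t i)
          (∑ i : Fin d, (p' ζ i * q ζ i + p ζ i * q' ζ i)) ζ :=
        HasDerivAt.fun_sum (fun i _ => (hp ζ i).mul (hq ζ i))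
      simpa [Finset.sum_add_distrib] using this
    · simp [hper]
  rw [intervalIntegral.integral_add (hc1.intervalIntegrable 0 1)
    (hc2.intervalIntegrable 0 1)] at key
  linarith

lemma split5 (c m : ℝ) (g0 g1 g2 g3 g4 : ℝ → ℝ) (h0 : Continuous g0) (h1 : Continuous g1)
    (h2 : Continuous g2) (h3 : Continuous g3) (h4 : Continuous g4) :
    ∫ ζ in (0:ℝ)..1, (-(c * g0 ζ) - m * ((g1 ζ - g2 ζ) + (g3 ζ - g4 ζ)))
      = -(c * ∫ ζ in (0:ℝ)..1, g0 ζ)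
        - m * (((∫ ζ in (0:ℝ)..1, g1 ζ) - ∫ ζ in (0:ℝ)..1, g2 ζ)
             + ((∫ ζ in (0:ℝ)..1, g3 ζ) - ∫ ζ in (0:ℝ)..1, g4 ζ)) := by
  have e : ∀ g : ℝ → ℝ, Continuous g → IntervalIntegrable g volume 0 1 :=
    fun g hg => hg.intervalIntegrable 0 1
  rw [intervalIntegral.integral_sub (e (fun ζ => -(c * g0 ζ)) ((continuous_const.mul h0).neg))
      (e (fun ζ => m * ((g1 ζ - g2 ζ) + (g3 ζ - g4 ζ))) (continuous_const.mul (((h1.sub h2).add (h3.sub h4))))),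
    intervalIntegral.integral_neg, intervalIntegral.integral_const_mul,
    intervalIntegral.integral_const_mul,
    intervalIntegral.integral_add (e (fun ζ => g1 ζ - g2 ζ) (h1.sub h2)) (e (fun ζ => g3 ζ - g4 ζ) (h3.sub h4)),
    intervalIntegral.integral_sub (e _ h1) (e _ h2),
    intervalIntegral.integral_sub (e _ h3) (e _ h4)]

lemma split3 (c m : ℝ) (g0 g1 g2 : ℝ → ℝ) (h0 : Continuous g0) (h1 : Continuous g1)
    (h2 : Continuous g2) :
    ∫ ζ in (0:ℝ)..1, (-(c * g0 ζ) - m * (g1 ζ - g2 ζ))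
      = -(c * ∫ ζ in (0:ℝ)..1, g0 ζ)
        - m * ((∫ ζ in (0:ℝ)..1, g1 ζ) - ∫ ζ in (0:ℝ)..1, g2 ζ) := by
  have e : ∀ g : ℝ → ℝ, Continuous g → IntervalIntegrable g volume 0 1 :=
    fun g hg => hg.intervalIntegrable 0 1
  rw [intervalIntegral.integral_sub (e (fun ζ => -(c * g0 ζ)) ((continuous_const.mul h0).neg))
      (e (fun ζ => m * (g1 ζ - g2 ζ)) (continuous_const.mul (h1.sub h2))),
    intervalIntegral.integral_neg, intervalIntegral.integral_const_mul,
    intervalIntegral.integral_const_mul,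
    intervalIntegral.integral_sub (e _ h1) (e _ h2)]

noncomputable def wfn (d : ℕ) (u : ℝ → ℝ → Fin d → ℝ) (x ζ : ℝ) : Fin d → ℝ :=
  fderiv ℝ (fun p : ℝ × ℝ => u p.1 p.2) (x, ζ) (1, 0)

noncomputable def aFn (d : ℕ) (μ : ℝ) (ω : ℝ → ℝ) (ψ : ℝ → Fin d → ℝ)
    (x ζ : ℝ) (i : Fin d) : ℝ :=
  -(ω x * deriv ψ ζ i) - μ * (ψ (ζ + x) i - 2 * ψ ζ i + ψ (ζ - x) i)

noncomputable def aFn' (d : ℕ) (μ : ℝ) (ω : ℝ → ℝ) (ψ : ℝ → Fin d → ℝ)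
    (x ζ : ℝ) (i : Fin d) : ℝ :=
  -(deriv ω x * deriv ψ ζ i) - μ * (deriv ψ (ζ + x) i - deriv ψ (ζ - x) i)

noncomputable def An (d : ℕ) (μ : ℝ) (f : (Fin d → ℝ) → (Fin d → ℝ)) (ω : ℝ → ℝ)
    (u : ℝ → ℝ → Fin d → ℝ) (ψ : ℝ → Fin d → ℝ) (x ζ : ℝ) : ℝ :=
  (∑ i, aFn d μ ω ψ x ζ i * u x ζ i) - ∑ i, ψ ζ i * f (u x ζ) i

noncomputable def An' (d : ℕ) (μ : ℝ) (f : (Fin d → ℝ) → (Fin d → ℝ)) (ω : ℝ → ℝ)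
    (u : ℝ → ℝ → Fin d → ℝ) (ψ : ℝ → Fin d → ℝ) (x ζ : ℝ) : ℝ :=
  (∑ i, (aFn' d μ ω ψ x ζ i * u x ζ i + aFn d μ ω ψ x ζ i * wfn d u x ζ i))
    - ∑ i, ψ ζ i * fderiv ℝ f (u x ζ) (wfn d u x ζ) i

set_option maxHeartbeats 2000000 in
theorem linear_group_velocity_formula
    (d : ℕ) (hd : 0 < d) (μ : ℝ)
    (f : (Fin d → ℝ) → (Fin d → ℝ)) (hf : ContDiff ℝ 1 f)
    (I : Set ℝ) (hI : IsOpen I) (kb : ℝ) (hkb : kb ∈ I)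
    (u : ℝ → ℝ → Fin d → ℝ) (ω : ℝ → ℝ)
    (hu : ContDiffOn ℝ 2 (fun p : ℝ × ℝ => u p.1 p.2) (I ×ˢ Set.univ))
    (hω : ContDiffOn ℝ 1 ω I)
    (huper : ∀ κ ∈ I, ∀ ζ : ℝ, u κ (ζ + 1) = u κ ζ)
    (hprof : ∀ κ ∈ I, ∀ ζ : ℝ, ω κ • deriv (u κ) ζ
      = μ • (u κ (ζ + κ) - (2:ℝ) • u κ ζ + u κ (ζ - κ)) + f (u κ ζ))
    (ψ : ℝ → Fin d → ℝ) (hψ : ContDiff ℝ 1 ψ) (hψper : ∀ ζ : ℝ, ψ (ζ + 1) = ψ ζ)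
    (hψadj : ∀ ζ : ℝ, ω kb • deriv ψ ζ
        + μ • (ψ (ζ + kb) - (2:ℝ) • ψ ζ + ψ (ζ - kb))
        + (fun i => ∑ l : Fin d, fderiv ℝ f (u kb ζ) (Pi.single i 1) l * ψ ζ l) = 0)
    (hnorm : (∫ ζ in (0:ℝ)..1, ∑ i : Fin d, ψ ζ i * deriv (u kb) ζ i) = 1) :
    deriv ω kb = ∫ ζ in (0:ℝ)..1,
      ∑ i : Fin d, ψ ζ i * (μ * (deriv (u kb) (ζ + kb) i - deriv (u kb) (ζ - kb) i)) := by
  classical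
  have hIU : IsOpen (I ×ˢ (Set.univ : Set ℝ)) := hI.prod isOpen_univ
  -- ψ facts
  have hψd : Differentiable ℝ ψ := hψ.differentiable one_ne_zero
  have hdψ : ∀ (ζ : ℝ) (i : Fin d), HasDerivAt (fun t => ψ t i) (deriv ψ ζ i) ζ :=
    fun ζ i => hasDerivAt_pi.1 (hψd ζ).hasDerivAt i
  have hcψ : Continuous ψ := hψ.continuous
  have hcψ' : Continuous (deriv ψ) := hψ.continuous_deriv le_rfl
  have hcψi : ∀ i, Continuous fun ζ => ψ ζ i := fun i => (continuous_apply i).comp hcψ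
  have hcψ'i : ∀ i, Continuous fun ζ => deriv ψ ζ i := fun i => (continuous_apply i).comp hcψ'
  have hψ'per : ∀ ζ, deriv ψ (ζ + 1) = deriv ψ ζ := by
    intro ζ
    have h1 : (fun t => ψ (t + 1)) = ψ := funext hψper
    calc deriv ψ (ζ + 1) = deriv (fun t => ψ (t + 1)) ζ := (deriv_comp_add_const ψ 1 ζ).symm
    _ = deriv ψ ζ := by rw [h1]
  -- slices of u
  have hslice : ∀ κ, κ ∈ I → ContDiff ℝ 2 (u κ) := by
    intro κ hκ
    have h2 : ContDiffOn ℝ 2 (fun ζ : ℝ => u κ ζ) Set.univ :=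
      hu.comp ((contDiff_const.prodMk contDiff_id).contDiffOn)
        (fun ζ _ => ⟨hκ, Set.mem_univ _⟩)
    exact contDiffOn_univ.mp h2
  have hud : ∀ κ, κ ∈ I → ∀ ζ, HasDerivAt (u κ) (deriv (u κ) ζ) ζ := fun κ hκ ζ =>
    (((hslice κ hκ).differentiable (by norm_num)) ζ).hasDerivAt
  have hudi : ∀ κ, κ ∈ I → ∀ ζ i, HasDerivAt (fun t => u κ t i) (deriv (u κ) ζ i) ζ :=
    fun κ hκ ζ i => hasDerivAt_pi.1 (hud κ hκ ζ) i
  have hcu : ∀ κ, κ ∈ I → Continuous (u κ) := fun κ hκ => (hslice κ hκ).continuous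
  have hcu' : ∀ κ, κ ∈ I → Continuous (deriv (u κ)) := fun κ hκ =>
    (hslice κ hκ).continuous_deriv (by norm_num)
  have hcui : ∀ κ, κ ∈ I → ∀ i, Continuous fun ζ => u κ ζ i :=
    fun κ hκ i => (continuous_apply i).comp (hcu κ hκ)
  have hcu'i : ∀ κ, κ ∈ I → ∀ i, Continuous fun ζ => deriv (u κ) ζ i :=
    fun κ hκ i => (continuous_apply i).comp (hcu' κ hκ)
  have hu'per : ∀ κ, κ ∈ I → ∀ ζ, deriv (u κ) (ζ + 1) = deriv (u κ) ζ := by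
    intro κ hκ ζ
    have h1 : (fun t => u κ (t + 1)) = u κ := funext (huper κ hκ)
    calc deriv (u κ) (ζ + 1) = deriv (fun t => u κ (t + 1)) ζ :=
          (deriv_comp_add_const (u κ) 1 ζ).symm
    _ = deriv (u κ) ζ := by rw [h1]
  -- partial derivative in κ
  have hUdiff : ∀ p ∈ I ×ˢ (Set.univ : Set ℝ),
      HasFDerivAt (fun p : ℝ × ℝ => u p.1 p.2)
        (fderiv ℝ (fun p : ℝ × ℝ => u p.1 p.2) p) p := by
    intro p hp
    exact ((hu.differentiableOn (by norm_num)).differentiableAt (hIU.mem_nhds hp)).hasFDerivAt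
  have hw : ∀ x, x ∈ I → ∀ ζ, HasDerivAt (fun t => u t ζ) (wfn d u x ζ) x := by
    intro x hx ζ
    have h1 : HasDerivAt (fun t : ℝ => (t, ζ)) ((1:ℝ), (0:ℝ)) x :=
      (hasDerivAt_id x).prodMk (hasDerivAt_const x ζ)
    exact (hUdiff (x, ζ) ⟨hx, Set.mem_univ _⟩).comp_hasDerivAt x h1
  have hwi : ∀ x, x ∈ I → ∀ ζ i, HasDerivAt (fun t => u t ζ i) (wfn d u x ζ i) x :=
    fun x hx ζ i => hasDerivAt_pi.1 (hw x hx ζ) i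
  have hcw : ContinuousOn (fun p : ℝ × ℝ => wfn d u p.1 p.2) (I ×ˢ Set.univ) := by
    have h1 : ContinuousOn (fderiv ℝ (fun p : ℝ × ℝ => u p.1 p.2)) (I ×ˢ Set.univ) :=
      hu.continuousOn_fderiv_of_isOpen hIU (by norm_num)
    exact h1.clm_apply continuousOn_const
  -- derivative of x ↦ f (u x ζ)
  have hfu : ∀ x, x ∈ I → ∀ ζ, HasDerivAt (fun t => f (u t ζ))
      (fderiv ℝ f (u x ζ) (wfn d u x ζ)) x := fun x hx ζ =>
    ((hf.differentiable one_ne_zero) (u x ζ)).hasFDerivAt.comp_hasDerivAt x (hw x hx ζ)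
  -- componentwise profile equation
  have hcomp : ∀ κ, κ ∈ I → ∀ ζ i, f (u κ ζ) i
      = ω κ * deriv (u κ) ζ i - μ * (u κ (ζ + κ) i - 2 * u κ ζ i + u κ (ζ - κ) i) := by
    intro κ hκ ζ i
    have h := congrFun (hprof κ hκ ζ) i
    simp only [Pi.smul_apply, Pi.add_apply, Pi.sub_apply, smul_eq_mul] at h
    linarith
  -- Step 1 : the functional vanishes identically on I
  have step1 : ∀ κ, κ ∈ I → (∫ ζ in (0:ℝ)..1, An d μ f ω u ψ κ ζ) = 0 := by
    intro κ hκ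
    have hpoint : ∀ ζ, An d μ f ω u ψ κ ζ =
        -(ω κ * (∑ i, (deriv ψ ζ i * u κ ζ i + ψ ζ i * deriv (u κ) ζ i)))
        - μ * (((∑ i, ψ (ζ + κ) i * u κ ζ i) - (∑ i, ψ ζ i * u κ (ζ - κ) i))
             + ((∑ i, ψ (ζ - κ) i * u κ ζ i) - (∑ i, ψ ζ i * u κ (ζ + κ) i))) := by
      intro ζ
      have key : ∀ i : Fin d, aFn d μ ω ψ κ ζ i * u κ ζ i - ψ ζ i * f (u κ ζ) i
          = -(ω κ * (deriv ψ ζ i * u κ ζ i + ψ ζ i * deriv (u κ) ζ i))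
            - μ * ((ψ (ζ + κ) i * u κ ζ i - ψ ζ i * u κ (ζ - κ) i)
                 + (ψ (ζ - κ) i * u κ ζ i - ψ ζ i * u κ (ζ + κ) i)) := by
        intro i; rw [aFn, hcomp κ hκ ζ i]; ring
      calc An d μ f ω u ψ κ ζ
          = ∑ i, (aFn d μ ω ψ κ ζ i * u κ ζ i - ψ ζ i * f (u κ ζ) i) := by
            rw [An, Finset.sum_sub_distrib]
        _ = ∑ i, (-(ω κ * (deriv ψ ζ i * u κ ζ i + ψ ζ i * deriv (u κ) ζ i))
            - μ * ((ψ (ζ + κ) i * u κ ζ i - ψ ζ i * u κ (ζ - κ) i)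
                 + (ψ (ζ - κ) i * u κ ζ i - ψ ζ i * u κ (ζ + κ) i))) :=
            Finset.sum_congr rfl (fun i _ => key i)
        _ = _ := by
            simp only [Finset.sum_sub_distrib, Finset.sum_add_distrib, Finset.sum_neg_distrib,
              ← Finset.mul_sum]
    -- continuity of the pieces
    have c0 : Continuous fun ζ => ∑ i, (deriv ψ ζ i * u κ ζ i + ψ ζ i * deriv (u κ) ζ i) :=
      continuous_finset_sum _ fun i _ =>
        ((hcψ'i i).mul (hcui κ hκ i)).add ((hcψi i).mul (hcu'i κ hκ i))
    have c1 : Continuous fun ζ => ∑ i, ψ (ζ + κ) i * u κ ζ i :=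
      continuous_finset_sum _ fun i _ =>
        (((hcψi i).comp (continuous_add_right κ)).mul (hcui κ hκ i))
    have c2 : Continuous fun ζ => ∑ i, ψ ζ i * u κ (ζ - κ) i :=
      continuous_finset_sum _ fun i _ =>
        ((hcψi i).mul ((hcui κ hκ i).comp (continuous_sub_right κ)))
    have c3 : Continuous fun ζ => ∑ i, ψ (ζ - κ) i * u κ ζ i :=
      continuous_finset_sum _ fun i _ =>
        (((hcψi i).comp (continuous_sub_right κ)).mul (hcui κ hκ i))
    have c4 : Continuous fun ζ => ∑ i, ψ ζ i * u κ (ζ + κ) i :=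
      continuous_finset_sum _ fun i _ =>
        ((hcψi i).mul ((hcui κ hκ i).comp (continuous_add_right κ)))
    -- the three integral identities
    have hψ10 : ψ 1 = ψ 0 := by simpa using hψper 0
    have hu10 : u κ 1 = u κ 0 := by simpa using huper κ hκ 0
    have hT0 : (∫ ζ in (0:ℝ)..1, ∑ i, (deriv ψ ζ i * u κ ζ i + ψ ζ i * deriv (u κ) ζ i)) = 0 := by
      apply integral_deriv_periodic (fun ζ => ∑ i, ψ ζ i * u κ ζ i) _ ?_ c0 ?_
      · intro ζ
        exact HasDerivAt.fun_sum fun i _ => (hdψ ζ i).mul (hudi κ hκ ζ i)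
      · show ∑ i, ψ 1 i * u κ 1 i = ∑ i, ψ 0 i * u κ 0 i
        rw [hψ10, hu10]
    have hshift1 : (∫ ζ in (0:ℝ)..1, ∑ i, ψ (ζ + κ) i * u κ ζ i)
        = ∫ ζ in (0:ℝ)..1, ∑ i, ψ ζ i * u κ (ζ - κ) i := by
      have hgper : Function.Periodic (fun ζ => ∑ i, ψ ζ i * u κ (ζ - κ) i) 1 := by
        intro ζ
        have h2 : ζ + 1 - κ = (ζ - κ) + 1 := by ring
        simp only [h2, hψper, huper κ hκ]
      have h := shift_integral _ hgper κ
      rw [← h]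
      apply intervalIntegral.integral_congr
      intro ζ _
      simp [add_sub_cancel_right]
    have hshift2 : (∫ ζ in (0:ℝ)..1, ∑ i, ψ (ζ - κ) i * u κ ζ i)
        = ∫ ζ in (0:ℝ)..1, ∑ i, ψ ζ i * u κ (ζ + κ) i := by
      have hgper : Function.Periodic (fun ζ => ∑ i, ψ ζ i * u κ (ζ + κ) i) 1 := by
        intro ζ
        have h2 : ζ + 1 + κ = (ζ + κ) + 1 := by ring
        simp only [h2, hψper, huper κ hκ]
      have h := shift_integral _ hgper (-κ)
      rw [← h]
      apply intervalIntegral.integral_congr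
      intro ζ _
      have h3 : ζ + -κ = ζ - κ := by ring
      have h5 : ζ - κ + κ = ζ := by ring
      simp only [h3, h5]
    rw [intervalIntegral.integral_congr (g := fun ζ =>
        -(ω κ * (∑ i, (deriv ψ ζ i * u κ ζ i + ψ ζ i * deriv (u κ) ζ i)))
        - μ * (((∑ i, ψ (ζ + κ) i * u κ ζ i) - (∑ i, ψ ζ i * u κ (ζ - κ) i))
             + ((∑ i, ψ (ζ - κ) i * u κ ζ i) - (∑ i, ψ ζ i * u κ (ζ + κ) i))))
      (fun ζ _ => hpoint ζ)]
    rw [split5 _ _ _ _ _ _ _ c0 c1 c2 c3 c4, hT0, hshift1, hshift2]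
    ring
  -- Step 2 : derivative in κ of the integrand
  have hAderiv : ∀ x, x ∈ I → ∀ ζ,
      HasDerivAt (fun t => An d μ f ω u ψ t ζ) (An' d μ f ω u ψ x ζ) x := by
    intro x hx ζ
    have hω' : HasDerivAt ω (deriv ω x) x :=
      ((hω.differentiableOn one_ne_zero).differentiableAt (hI.mem_nhds hx)).hasDerivAt
    have haF : ∀ i, HasDerivAt (fun t => aFn d μ ω ψ t ζ i) (aFn' d μ ω ψ x ζ i) x := by
      intro i
      have h2 : HasDerivAt (fun t => ψ (ζ + t) i) (deriv ψ (ζ + x) i) x := by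
        have := (hdψ (ζ + x) i).comp x ((hasDerivAt_const x ζ).add (hasDerivAt_id x))
        simpa [Function.comp_def] using this
      have h3 : HasDerivAt (fun t => ψ (ζ - t) i) (-(deriv ψ (ζ - x) i)) x := by
        have := (hdψ (ζ - x) i).comp x ((hasDerivAt_const x ζ).sub (hasDerivAt_id x))
        simpa [Function.comp_def] using this
      have h1 : HasDerivAt (fun t => ω t * deriv ψ ζ i) (deriv ω x * deriv ψ ζ i) x :=
        hω'.mul_const _
      have h4 := (h1.neg).sub ((((h2.sub_const (2 * ψ ζ i)).add h3)).const_mul μ)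
      simp only [aFn, aFn']
      convert h4 using 1
      · rfl
      · rfl
      · funext t
        simp only [Pi.neg_apply, Pi.sub_apply, Pi.add_apply]
      · ring
    have hsum1 : HasDerivAt (fun t => ∑ i, aFn d μ ω ψ t ζ i * u t ζ i)
        (∑ i, (aFn' d μ ω ψ x ζ i * u x ζ i + aFn d μ ω ψ x ζ i * wfn d u x ζ i)) x :=
      HasDerivAt.fun_sum fun i _ => (haF i).mul (hwi x hx ζ i)
    have hsum2 : HasDerivAt (fun t => ∑ i, ψ ζ i * f (u t ζ) i)
        (∑ i, ψ ζ i * fderiv ℝ f (u x ζ) (wfn d u x ζ) i) x :=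
      HasDerivAt.fun_sum fun i _ => (hasDerivAt_pi.1 (hfu x hx ζ) i).const_mul (ψ ζ i)
    exact hsum1.sub hsum2
  -- joint continuity of An and An'
  have cω : ContinuousOn (fun p : ℝ × ℝ => ω p.1) (I ×ˢ Set.univ) :=
    hω.continuousOn.comp continuous_fst.continuousOn (fun p hp => hp.1)
  have cω' : ContinuousOn (fun p : ℝ × ℝ => deriv ω p.1) (I ×ˢ Set.univ) :=
    (hω.continuousOn_deriv_of_isOpen hI le_rfl).comp continuous_fst.continuousOn
      (fun p hp => hp.1)
  have cUi : ∀ i, ContinuousOn (fun p : ℝ × ℝ => u p.1 p.2 i) (I ×ˢ Set.univ) :=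
    fun i => (continuous_apply i).comp_continuousOn hu.continuousOn
  have cwi : ∀ i, ContinuousOn (fun p : ℝ × ℝ => wfn d u p.1 p.2 i) (I ×ˢ Set.univ) :=
    fun i => (continuous_apply i).comp_continuousOn hcw
  have cDfw : ∀ i, ContinuousOn (fun p : ℝ × ℝ => fderiv ℝ f (u p.1 p.2) (wfn d u p.1 p.2) i)
      (I ×ˢ Set.univ) := fun i => (continuous_apply i).comp_continuousOn
    (((hf.continuous_fderiv one_ne_zero).comp_continuousOn hu.continuousOn).clm_apply hcw)
  have caF : ∀ i, ContinuousOn (fun p : ℝ × ℝ => aFn d μ ω ψ p.1 p.2 i) (I ×ˢ Set.univ) := by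
    intro i
    apply ContinuousOn.sub
    · exact (cω.mul ((hcψ'i i).comp continuous_snd).continuousOn).neg
    · exact continuousOn_const.mul
        ((((hcψi i).comp (continuous_snd.add continuous_fst)).continuousOn.sub
          (continuousOn_const.mul ((hcψi i).comp continuous_snd).continuousOn)).add
          ((hcψi i).comp (continuous_snd.sub continuous_fst)).continuousOn)
  have caF' : ∀ i, ContinuousOn (fun p : ℝ × ℝ => aFn' d μ ω ψ p.1 p.2 i) (I ×ˢ Set.univ) := by
    intro i
    apply ContinuousOn.sub
    · exact (cω'.mul ((hcψ'i i).comp continuous_snd).continuousOn).neg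
    · exact continuousOn_const.mul
        (((hcψ'i i).comp (continuous_snd.add continuous_fst)).continuousOn.sub
          ((hcψ'i i).comp (continuous_snd.sub continuous_fst)).continuousOn)
  have hcA : ContinuousOn (fun p : ℝ × ℝ => An d μ f ω u ψ p.1 p.2) (I ×ˢ Set.univ) := by
    apply ContinuousOn.sub
    · exact continuousOn_finset_sum _ fun i _ => (caF i).mul (cUi i)
    · refine continuousOn_finset_sum _ fun i _ => ?_
      exact (((hcψi i).comp continuous_snd).continuousOn).mul
        ((continuous_apply i).comp_continuousOn (hf.continuous.comp_continuousOn hu.continuousOn))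
  have hcA' : ContinuousOn (fun p : ℝ × ℝ => An' d μ f ω u ψ p.1 p.2) (I ×ˢ Set.univ) := by
    apply ContinuousOn.sub
    · exact continuousOn_finset_sum _ fun i _ =>
        ((caF' i).mul (cUi i)).add ((caF i).mul (cwi i))
    · exact continuousOn_finset_sum _ fun i _ =>
        (((hcψi i).comp continuous_snd).continuousOn).mul (cDfw i)
  -- slice continuity
  have hslcA : ∀ x, x ∈ I → Continuous fun ζ => An d μ f ω u ψ x ζ := fun x hx =>
    hcA.comp_continuous (continuous_const.prodMk continuous_id)
      (fun ζ => ⟨hx, Set.mem_univ _⟩)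
  have hslcA' : ∀ x, x ∈ I → Continuous fun ζ => An' d μ f ω u ψ x ζ := fun x hx =>
    hcA'.comp_continuous (continuous_const.prodMk continuous_id)
      (fun ζ => ⟨hx, Set.mem_univ _⟩)
  -- Step 3 : differentiation under the integral sign
  obtain ⟨ε, hε, hball⟩ := Metric.isOpen_iff.1 hI kb hkb
  have hε2 : 0 < ε / 2 := by linarith
  have hcb : Metric.closedBall kb (ε / 2) ⊆ I :=
    (Metric.closedBall_subset_ball (by linarith)).trans hball
  have hK : IsCompact ((Metric.closedBall kb (ε / 2)) ×ˢ Set.Icc (0:ℝ) 1) :=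
    (isCompact_closedBall _ _).prod isCompact_Icc
  have hKsub : ((Metric.closedBall kb (ε / 2)) ×ˢ Set.Icc (0:ℝ) 1) ⊆ I ×ˢ Set.univ :=
    fun p hp => ⟨hcb hp.1, Set.mem_univ _⟩
  obtain ⟨C, hC⟩ := hK.exists_bound_of_continuousOn (hcA'.mono hKsub)
  have hkey : HasDerivAt (fun x => ∫ ζ in (0:ℝ)..1, An d μ f ω u ψ x ζ)
      (∫ ζ in (0:ℝ)..1, An' d μ f ω u ψ kb ζ) kb := by
    refine (intervalIntegral.hasDerivAt_integral_of_dominated_loc_of_deriv_le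
      (μ := MeasureTheory.volume) (F := fun x ζ => An d μ f ω u ψ x ζ)
      (F' := fun x ζ => An' d μ f ω u ψ x ζ) (a := (0:ℝ)) (b := 1)
      (x₀ := kb) (bound := fun _ => C) (s := Metric.ball kb (ε/2)) (Metric.ball_mem_nhds kb hε2) ?_ ?_ ?_ ?_ ?_ ?_).2
    · filter_upwards [hI.mem_nhds hkb] with x hx
      exact (hslcA x hx).aestronglyMeasurable
    · exact (hslcA kb hkb).intervalIntegrable 0 1
    · exact (hslcA' kb hkb).aestronglyMeasurable
    · apply Filter.Eventually.of_forall
      intro t ht x hx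
      have ht' : t ∈ Set.Icc (0:ℝ) 1 := by
        rw [Set.uIoc_of_le zero_le_one] at ht
        exact ⟨ht.1.le, ht.2⟩
      exact hC (x, t) ⟨Metric.ball_subset_closedBall hx, ht'⟩
    · exact intervalIntegrable_const
    · apply Filter.Eventually.of_forall
      intro t _ x hx
      have hx' : x ∈ I := hball (Metric.ball_subset_ball (by linarith) hx)
      exact hAderiv x hx' t
  have hzero : (∫ ζ in (0:ℝ)..1, An' d μ f ω u ψ kb ζ) = 0 := by
    have h1 : deriv (fun x => ∫ ζ in (0:ℝ)..1, An d μ f ω u ψ x ζ) kb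
        = ∫ ζ in (0:ℝ)..1, An' d μ f ω u ψ kb ζ := hkey.deriv
    have h2 : (fun x => ∫ ζ in (0:ℝ)..1, An d μ f ω u ψ x ζ) =ᶠ[nhds kb] fun _ => (0:ℝ) := by
      filter_upwards [hI.mem_nhds hkb] with x hx using step1 x hx
    rw [← h1, h2.deriv_eq, deriv_const]
  -- Step 4 : evaluate the integral of An' at kb
  have hadj : ∀ (ζ : ℝ) (i : Fin d), aFn d μ ω ψ kb ζ i
      = ∑ l, fderiv ℝ f (u kb ζ) (Pi.single i 1) l * ψ ζ l := by
    intro ζ i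
    have h := congrFun (hψadj ζ) i
    simp only [Pi.add_apply, Pi.smul_apply, Pi.sub_apply, smul_eq_mul, Pi.zero_apply] at h
    rw [aFn]; linarith
  have hfd_expand : ∀ (ζ : ℝ) (v : Fin d → ℝ) (l : Fin d), fderiv ℝ f (u kb ζ) v l
      = ∑ j, v j * fderiv ℝ f (u kb ζ) (Pi.single j 1) l := by
    intro ζ v l
    have hv : v = ∑ j, v j • (Pi.single j 1 : Fin d → ℝ) := by
      funext m
      simp [Pi.single_apply, mul_ite, Finset.sum_ite_eq]
    conv_lhs => rw [hv, map_sum]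
    simp [Finset.sum_apply, smul_eq_mul]
  have hcancel : ∀ ζ, (∑ i, aFn d μ ω ψ kb ζ i * wfn d u kb ζ i)
      = ∑ i, ψ ζ i * fderiv ℝ f (u kb ζ) (wfn d u kb ζ) i := by
    intro ζ
    calc (∑ i, aFn d μ ω ψ kb ζ i * wfn d u kb ζ i)
        = ∑ i, ∑ l, ψ ζ l * (wfn d u kb ζ i * fderiv ℝ f (u kb ζ) (Pi.single i 1) l) := by
          refine Finset.sum_congr rfl fun i _ => ?_
          rw [hadj ζ i, Finset.sum_mul]
          exact Finset.sum_congr rfl fun l _ => by ring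
      _ = ∑ l, ∑ i, ψ ζ l * (wfn d u kb ζ i * fderiv ℝ f (u kb ζ) (Pi.single i 1) l) :=
          Finset.sum_comm
      _ = ∑ l, ψ ζ l * fderiv ℝ f (u kb ζ) (wfn d u kb ζ) l := by
          refine Finset.sum_congr rfl fun l _ => ?_
          rw [hfd_expand ζ _ l, Finset.mul_sum]
  have hA'point : ∀ ζ, An' d μ f ω u ψ kb ζ =
      -(deriv ω kb * ∑ i, deriv ψ ζ i * u kb ζ i)
      - μ * ((∑ i, deriv ψ (ζ + kb) i * u kb ζ i)
           - (∑ i, deriv ψ (ζ - kb) i * u kb ζ i)) := by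
    intro ζ
    have h0 : An' d μ f ω u ψ kb ζ = ∑ i, aFn' d μ ω ψ kb ζ i * u kb ζ i := by
      rw [An', Finset.sum_add_distrib, hcancel ζ]; ring
    rw [h0]
    have key : ∀ i : Fin d, aFn' d μ ω ψ kb ζ i * u kb ζ i
        = -(deriv ω kb * (deriv ψ ζ i * u kb ζ i))
          - μ * (deriv ψ (ζ + kb) i * u kb ζ i - deriv ψ (ζ - kb) i * u kb ζ i) := by
      intro i; rw [aFn']; ring
    rw [Finset.sum_congr rfl (fun i _ => key i)]
    simp only [Finset.sum_sub_distrib, Finset.sum_neg_distrib, ← Finset.mul_sum]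
  -- continuity of the final pieces
  have cg0 : Continuous fun ζ => ∑ i, deriv ψ ζ i * u kb ζ i :=
    continuous_finset_sum _ fun i _ => (hcψ'i i).mul (hcui kb hkb i)
  have cg1 : Continuous fun ζ => ∑ i, deriv ψ (ζ + kb) i * u kb ζ i :=
    continuous_finset_sum _ fun i _ =>
      ((hcψ'i i).comp (continuous_add_right kb)).mul (hcui kb hkb i)
  have cg2 : Continuous fun ζ => ∑ i, deriv ψ (ζ - kb) i * u kb ζ i :=
    continuous_finset_sum _ fun i _ =>
      ((hcψ'i i).comp (continuous_sub_right kb)).mul (hcui kb hkb i)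
  have cN1 : Continuous fun ζ => ∑ i, ψ ζ i * deriv (u kb) (ζ + kb) i :=
    continuous_finset_sum _ fun i _ =>
      (hcψi i).mul ((hcu'i kb hkb i).comp (continuous_add_right kb))
  have cN2 : Continuous fun ζ => ∑ i, ψ ζ i * deriv (u kb) (ζ - kb) i :=
    continuous_finset_sum _ fun i _ =>
      (hcψi i).mul ((hcu'i kb hkb i).comp (continuous_sub_right kb))
  have cq1 : Continuous fun ζ => ∑ i, deriv ψ ζ i * u kb (ζ - kb) i :=
    continuous_finset_sum _ fun i _ =>
      (hcψ'i i).mul ((hcui kb hkb i).comp (continuous_sub_right kb))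
  have cq2 : Continuous fun ζ => ∑ i, deriv ψ ζ i * u kb (ζ + kb) i :=
    continuous_finset_sum _ fun i _ =>
      (hcψ'i i).mul ((hcui kb hkb i).comp (continuous_add_right kb))
  -- the split zero identity
  have hsplit : -(deriv ω kb * ∫ ζ in (0:ℝ)..1, ∑ i, deriv ψ ζ i * u kb ζ i)
      - μ * ((∫ ζ in (0:ℝ)..1, ∑ i, deriv ψ (ζ + kb) i * u kb ζ i)
           - (∫ ζ in (0:ℝ)..1, ∑ i, deriv ψ (ζ - kb) i * u kb ζ i)) = 0 := by
    have h1 : (∫ ζ in (0:ℝ)..1, An' d μ f ω u ψ kb ζ)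
        = ∫ ζ in (0:ℝ)..1, (-(deriv ω kb * ∑ i, deriv ψ ζ i * u kb ζ i)
          - μ * ((∑ i, deriv ψ (ζ + kb) i * u kb ζ i)
               - (∑ i, deriv ψ (ζ - kb) i * u kb ζ i))) :=
      intervalIntegral.integral_congr fun ζ _ => hA'point ζ
    rw [split3 _ _ _ _ _ cg0 cg1 cg2] at h1
    rw [← h1]
    exact hzero
  -- evaluate the three integrals
  have hψ10 : ψ 1 = ψ 0 := by simpa using hψper 0
  have hu10 : u kb 1 = u kb 0 := by simpa using huper kb hkb 0
  have hJ : (∫ ζ in (0:ℝ)..1, ∑ i, deriv ψ ζ i * u kb ζ i) = -1 := by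
    rw [ibp_periodic hdψ (hudi kb hkb) cg0
      (continuous_finset_sum _ fun i _ => (hcψi i).mul (hcu'i kb hkb i))
      (fun i => by rw [hψ10, hu10]), hnorm]
  have hqm : ∀ (ζ : ℝ) (i : Fin d),
      HasDerivAt (fun t => u kb (t - kb) i) (deriv (u kb) (ζ - kb) i) ζ := by
    intro ζ i
    have := (hudi kb hkb (ζ - kb) i).comp ζ ((hasDerivAt_id ζ).sub_const kb)
    simpa [Function.comp_def] using this
  have hqp : ∀ (ζ : ℝ) (i : Fin d),
      HasDerivAt (fun t => u kb (t + kb) i) (deriv (u kb) (ζ + kb) i) ζ := by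
    intro ζ i
    have := (hudi kb hkb (ζ + kb) i).comp ζ ((hasDerivAt_id ζ).add_const kb)
    simpa [Function.comp_def] using this
  have hM1 : (∫ ζ in (0:ℝ)..1, ∑ i, deriv ψ (ζ + kb) i * u kb ζ i)
      = - ∫ ζ in (0:ℝ)..1, ∑ i, ψ ζ i * deriv (u kb) (ζ - kb) i := by
    have hper : Function.Periodic (fun ζ => ∑ i, deriv ψ ζ i * u kb (ζ - kb) i) 1 := by
      intro ζ
      have h2 : ζ + 1 - kb = (ζ - kb) + 1 := by ring
      simp only [h2, hψ'per, huper kb hkb]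
    have ha : (∫ ζ in (0:ℝ)..1, ∑ i, deriv ψ (ζ + kb) i * u kb ζ i)
        = ∫ ζ in (0:ℝ)..1, ∑ i, deriv ψ ζ i * u kb (ζ - kb) i := by
      rw [← shift_integral _ hper kb]
      apply intervalIntegral.integral_congr
      intro ζ _
      simp [add_sub_cancel_right]
    have h1k : u kb (1 - kb) = u kb (0 - kb) := by
      have h3 : (1:ℝ) - kb = (0 - kb) + 1 := by ring
      rw [h3, huper kb hkb]
    rw [ha, ibp_periodic (p := ψ) (q := fun t => u kb (t - kb)) (p' := deriv ψ)
      (q' := fun t => deriv (u kb) (t - kb)) hdψ hqm cq1 cN2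
      (fun i => by
        show ψ 1 i * u kb (1 - kb) i = ψ 0 i * u kb (0 - kb) i
        rw [hψ10, h1k])]
  have hM2 : (∫ ζ in (0:ℝ)..1, ∑ i, deriv ψ (ζ - kb) i * u kb ζ i)
      = - ∫ ζ in (0:ℝ)..1, ∑ i, ψ ζ i * deriv (u kb) (ζ + kb) i := by
    have hper : Function.Periodic (fun ζ => ∑ i, deriv ψ ζ i * u kb (ζ + kb) i) 1 := by
      intro ζ
      have h2 : ζ + 1 + kb = (ζ + kb) + 1 := by ring
      simp only [h2, hψ'per, huper kb hkb]
    have ha : (∫ ζ in (0:ℝ)..1, ∑ i, deriv ψ (ζ - kb) i * u kb ζ i)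
        = ∫ ζ in (0:ℝ)..1, ∑ i, deriv ψ ζ i * u kb (ζ + kb) i := by
      rw [← shift_integral _ hper (-kb)]
      apply intervalIntegral.integral_congr
      intro ζ _
      have h3 : ζ + -kb = ζ - kb := by ring
      have h5 : ζ - kb + kb = ζ := by ring
      simp only [h3, h5]
    have h1k : u kb (1 + kb) = u kb (0 + kb) := by
      have h3 : (1:ℝ) + kb = (0 + kb) + 1 := by ring
      rw [h3, huper kb hkb]
    rw [ha, ibp_periodic (p := ψ) (q := fun t => u kb (t + kb)) (p' := deriv ψ)
      (q' := fun t => deriv (u kb) (t + kb)) hdψ hqp cq2 cN1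
      (fun i => by
        show ψ 1 i * u kb (1 + kb) i = ψ 0 i * u kb (0 + kb) i
        rw [hψ10, h1k])]
  -- reformulate the goal
  have hgoal : (∫ ζ in (0:ℝ)..1,
        ∑ i, ψ ζ i * (μ * (deriv (u kb) (ζ + kb) i - deriv (u kb) (ζ - kb) i)))
      = μ * ((∫ ζ in (0:ℝ)..1, ∑ i, ψ ζ i * deriv (u kb) (ζ + kb) i)
           - ∫ ζ in (0:ℝ)..1, ∑ i, ψ ζ i * deriv (u kb) (ζ - kb) i) := by
    rw [intervalIntegral.integral_congr (g := fun ζ =>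
        μ * ((∑ i, ψ ζ i * deriv (u kb) (ζ + kb) i)
           - (∑ i, ψ ζ i * deriv (u kb) (ζ - kb) i))) ?_]
    · rw [intervalIntegral.integral_const_mul,
        intervalIntegral.integral_sub (cN1.intervalIntegrable 0 1)
          (cN2.intervalIntegrable 0 1)]
    · intro ζ _
      calc ∑ i, ψ ζ i * (μ * (deriv (u kb) (ζ + kb) i - deriv (u kb) (ζ - kb) i))
          = ∑ i, (μ * (ψ ζ i * deriv (u kb) (ζ + kb) i - ψ ζ i * deriv (u kb) (ζ - kb) i)) :=
            Finset.sum_congr rfl fun i _ => by ring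
        _ = μ * ∑ i, (ψ ζ i * deriv (u kb) (ζ + kb) i - ψ ζ i * deriv (u kb) (ζ - kb) i) :=
            (Finset.mul_sum _ _ _).symm
        _ = _ := by rw [Finset.sum_sub_distrib]
  rw [hgoal]
  rw [hJ, hM1, hM2] at hsplit
  linarith
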